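/- Kernel positivity criterion (matrix form of Theorem 2.3): Assume in addition that the pair (C, A) is observable, i.e. for every v ∈ ℂⁿ, if C Aᵏ v = 0 for all k ∈ ℕ then v = 0. Then Γ is positive definite if and only if the kernel K_{Θ,J}(z, ζ) := (J − Θ(z) J Θ(ζ)ᴴ)/(z + conj(ζ)) is a positive kernel on the set {z ∈ ℂ : Re z > 0 and zI_n − A is invertible}. -/

import Mathlib

open Matrix
open scoped Matrix ComplexOrder

/-- The signature matrix `J = diag(I_p, −I_m)`. -/
def signatureJ (p m : ℕ) : Matrix (Fin p ⊕ Fin m) (Fin p ⊕ Fin m) ℂ :=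
  Matrix.fromBlocks 1 0 0 (-1)

/-- The realization `Θ(λ) = I − C (λI − A)⁻¹ Γ⁻¹ Cᴴ J`. -/
noncomputable def ThetaRealization (n p m : ℕ) (A : Matrix (Fin n) (Fin n) ℂ)
    (C : Matrix (Fin p ⊕ Fin m) (Fin n) ℂ) (Γ : Matrix (Fin n) (Fin n) ℂ) (lam : ℂ) :
    Matrix (Fin p ⊕ Fin m) (Fin p ⊕ Fin m) ℂ :=
  1 - C * (lam • (1 : Matrix (Fin n) (Fin n) ℂ) - A)⁻¹ * Γ⁻¹ * Cᴴ * signatureJ p m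

/-- `K` is a positive matrix-valued kernel on the set `D`. -/
def IsPosKernelOn {α : Type*} {ι : Type*} [Fintype ι] (D : Set α)
    (K : α → α → Matrix ι ι ℂ) : Prop :=
  ∀ (M : ℕ) (ω : Fin M → α), (∀ k, ω k ∈ D) → ∀ c : Fin M → ι → ℂ,
    0 ≤ ∑ k, ∑ l, star (c k) ⬝ᵥ (K (ω k) (ω l)) *ᵥ c l

section KernelPositivityAux
open Polynomial

lemma sigJ_herm (p m : ℕ) : (signatureJ p m)ᴴ = signatureJ p m := by
  simp [signatureJ, fromBlocks_conjTranspose]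

lemma sigJ_mul_self (p m : ℕ) : signatureJ p m * signatureJ p m = 1 := by
  simp [signatureJ, fromBlocks_multiply, ← fromBlocks_one]

set_option maxHeartbeats 1000000 in
lemma key_identity (n p m : ℕ) (A : Matrix (Fin n) (Fin n) ℂ)
    (C : Matrix (Fin p ⊕ Fin m) (Fin n) ℂ) (Γ : Matrix (Fin n) (Fin n) ℂ)
    (hΓH : Γ.IsHermitian) (hΓinv : IsUnit Γ.det)
    (hLyap : Γ * A + Aᴴ * Γ = -(Cᴴ * signatureJ p m * C))
    (z ζ : ℂ) (hz : IsUnit (z • (1 : Matrix (Fin n) (Fin n) ℂ) - A).det)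
    (hζ : IsUnit (ζ • (1 : Matrix (Fin n) (Fin n) ℂ) - A).det) :
    signatureJ p m - ThetaRealization n p m A C Γ z * signatureJ p m *
        (ThetaRealization n p m A C Γ ζ)ᴴ
      = (z + star ζ) • (C * (z • (1 : Matrix (Fin n) (Fin n) ℂ) - A)⁻¹ * Γ⁻¹ *
          ((ζ • (1 : Matrix (Fin n) (Fin n) ℂ) - A)⁻¹)ᴴ * Cᴴ) := by
  set J := signatureJ p m with hJ
  set M := z • (1 : Matrix (Fin n) (Fin n) ℂ) - A with hMdef
  set P := ζ • (1 : Matrix (Fin n) (Fin n) ℂ) - A with hPdef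
  have hGH : (Γ⁻¹)ᴴ = Γ⁻¹ := hΓH.inv
  have hGG : ∀ X : Matrix (Fin n) (Fin p ⊕ Fin m) ℂ, Γ⁻¹ * (Γ * X) = X := fun X =>
    nonsing_inv_mul_cancel_left Γ X hΓinv
  have hGG' : ∀ X : Matrix (Fin n) (Fin p ⊕ Fin m) ℂ, Γ * (Γ⁻¹ * X) = X := fun X =>
    mul_nonsing_inv_cancel_left Γ X hΓinv
  have hMM : ∀ X : Matrix (Fin n) (Fin p ⊕ Fin m) ℂ, M⁻¹ * (M * X) = X := fun X =>
    nonsing_inv_mul_cancel_left M X hz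
  have hPP : ∀ X : Matrix (Fin n) (Fin p ⊕ Fin m) ℂ, Pᴴ * ((P⁻¹)ᴴ * X) = X := fun X => by
    rw [← Matrix.mul_assoc, ← conjTranspose_mul, nonsing_inv_mul P hζ, conjTranspose_one,
      Matrix.one_mul]
  have hJH : Jᴴ = J := sigJ_herm p m
  have hJ1 : J * J = 1 := sigJ_mul_self p m
  have hJJ : ∀ X : Matrix (Fin p ⊕ Fin m) (Fin p ⊕ Fin m) ℂ, J * (J * X) = X := fun X => by
    rw [← Matrix.mul_assoc, hJ1, Matrix.one_mul]
  have hJC : Cᴴ * J * C = Γ * M + Pᴴ * Γ - (z + star ζ) • Γ := by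
    have h1 : Cᴴ * J * C = -(Γ * A + Aᴴ * Γ) := by rw [hLyap, neg_neg]
    rw [h1, hMdef, hPdef]
    simp only [conjTranspose_sub, conjTranspose_smul, conjTranspose_one, Matrix.mul_sub,
      Matrix.sub_mul, Matrix.mul_smul, Matrix.smul_mul, Matrix.mul_one, Matrix.one_mul, add_smul]
    abel
  have hJC' : ∀ X : Matrix (Fin n) (Fin p ⊕ Fin m) ℂ,
      Cᴴ * (J * (C * X)) = Γ * (M * X) + Pᴴ * (Γ * X) - (z + star ζ) • (Γ * X) := fun X => by
    rw [← Matrix.mul_assoc, ← Matrix.mul_assoc, hJC]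
    simp only [Matrix.sub_mul, Matrix.add_mul, Matrix.smul_mul, Matrix.mul_assoc]
  have hθζ : (ThetaRealization n p m A C Γ ζ)ᴴ
      = 1 - J * (C * (Γ⁻¹ * ((P⁻¹)ᴴ * Cᴴ))) := by
    rw [ThetaRealization]
    simp only [conjTranspose_sub, conjTranspose_one, conjTranspose_mul, ← hJ, hJH, hGH,
      conjTranspose_conjTranspose, ← hPdef, Matrix.mul_assoc]
  rw [ThetaRealization, hθζ, ← hJ, ← hMdef]
  simp only [Matrix.sub_mul, Matrix.mul_sub, Matrix.one_mul, Matrix.mul_one, Matrix.mul_assoc,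
    hJJ, hJ1]
  simp only [hJC', Matrix.mul_add, Matrix.mul_sub, Matrix.mul_smul, hGG, hGG', hMM, hPP]
  abel

-- charmatrix evaluation
lemma charmatrix_eval (n : ℕ) (A : Matrix (Fin n) (Fin n) ℂ) (z : ℂ) :
    (charmatrix A).map (eval z) = z • (1 : Matrix (Fin n) (Fin n) ℂ) - A := by
  ext i j
  by_cases h : i = j
  · subst h; simp [charmatrix_apply, Matrix.sub_apply, Matrix.one_apply]
  · simp [charmatrix_apply, Matrix.sub_apply, Matrix.one_apply, h,
      Matrix.diagonal_apply_ne _ h]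

lemma charpoly_eval (n : ℕ) (A : Matrix (Fin n) (Fin n) ℂ) (z : ℂ) :
    eval z A.charpoly = (z • (1 : Matrix (Fin n) (Fin n) ℂ) - A).det := by
  have h := RingHom.map_det (evalRingHom z) (charmatrix A)
  rw [Matrix.charpoly, ← charmatrix_eval n A z]
  simpa [RingHom.mapMatrix_apply] using h

set_option maxHeartbeats 1000000 in
lemma resolvent_vanish {n : ℕ} {ι : Type*} [Fintype ι] (A : Matrix (Fin n) (Fin n) ℂ)
    (C : Matrix ι (Fin n) ℂ) (v : Fin n → ℂ)
    (hv : ∀ z : ℂ, 0 < z.re → IsUnit (z • (1 : Matrix (Fin n) (Fin n) ℂ) - A).det →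
      (C * (z • (1 : Matrix (Fin n) (Fin n) ℂ) - A)⁻¹) *ᵥ v = 0) :
    ∀ k : ℕ, (C * A ^ k) *ᵥ v = 0 := by
  -- the polynomial vector  q = C · adj(charmatrix A) · v
  set q : ι → ℂ[X] :=
    (C.map (Polynomial.C) * (charmatrix A).adjugate) *ᵥ (fun j => Polynomial.C (v j)) with hq
  -- evaluation of q at good points vanishes
  have hadj : ∀ z : ℂ, ((charmatrix A).adjugate).map (eval z)
      = (z • (1 : Matrix (Fin n) (Fin n) ℂ) - A).adjugate := by
    intro z
    have h := RingHom.map_adjugate (evalRingHom z) (charmatrix A)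
    simpa [RingHom.mapMatrix_apply, charmatrix_eval] using h
  have heval : ∀ z : ℂ, 0 < z.re → IsUnit (z • (1 : Matrix (Fin n) (Fin n) ℂ) - A).det →
      ∀ i, (q i).eval z = 0 := by
    intro z hz hdet i
    set M := z • (1 : Matrix (Fin n) (Fin n) ℂ) - A with hM
    have hsmul : M.det • M⁻¹ = M.adjugate := by
      rw [Matrix.inv_def, smul_smul, Ring.mul_inverse_cancel _ hdet, one_smul]
    have h0 : (C * M.adjugate) *ᵥ v = 0 := by
      rw [← hsmul, Matrix.mul_smul, Matrix.smul_mulVec, hv z hz hdet, smul_zero]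
    have h0i := congrFun h0 i
    rw [hq]
    simp only [Matrix.mulVec, Matrix.mul_apply, dotProduct, Matrix.map_apply, Pi.zero_apply] at h0i ⊢
    simp only [eval_finset_sum, eval_mul, eval_C]
    convert h0i using 2 with j hj
    congr 1
    · apply Finset.sum_congr rfl
      intro l _
      congr 1
      rw [← hadj z]
      simp [Matrix.map_apply]
  -- the set of good points is infinite
  have hinf : {z : ℂ | 0 < z.re ∧ IsUnit (z • (1 : Matrix (Fin n) (Fin n) ℂ) - A).det}.Infinite := by
    have h1 : {z : ℂ | 0 < z.re}.Infinite := by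
      apply Set.infinite_of_injective_forall_mem (f := fun k : ℕ => (k + 1 : ℂ))
      · intro a b hab
        simp only at hab
        exact_mod_cast add_right_cancel hab
      · intro a
        simp only [Set.mem_setOf_eq, Complex.add_re, Complex.natCast_re, Complex.one_re]
        positivity
    have h2 : {z : ℂ | ¬ IsUnit (z • (1 : Matrix (Fin n) (Fin n) ℂ) - A).det}.Finite := by
      apply Set.Finite.subset (Polynomial.finite_setOf_isRoot (A.charpoly_monic.ne_zero))
      intro z hz
      simp only [Set.mem_setOf_eq] at hz ⊢
      rw [Polynomial.IsRoot.def, charpoly_eval]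
      simpa [isUnit_iff_ne_zero] using hz
    apply Set.Infinite.mono _ (h1.diff h2)
    intro z hz
    exact ⟨hz.1, not_not.mp hz.2⟩
  -- hence q = 0
  have hq0 : ∀ i, q i = 0 := by
    intro i
    apply Polynomial.eq_zero_of_infinite_isRoot
    apply Set.Infinite.mono _ hinf
    intro z hz
    exact heval z hz.1 hz.2 i
  -- coefficient extraction
  set W : (Matrix (Fin n) (Fin n) ℂ)[X] := matPolyEquiv ((charmatrix A).adjugate) with hW
  have hCd : ∀ k : ℕ, C *ᵥ (W.coeff k *ᵥ v) = 0 := by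
    intro k
    funext i
    have h0 : (q i).coeff k = 0 := by rw [hq0 i]; simp
    rw [hq] at h0
    simp only [Matrix.mulVec, Matrix.mul_apply, dotProduct, Matrix.map_apply,
      Polynomial.finset_sum_coeff, Polynomial.coeff_mul_C, Polynomial.coeff_C_mul,
      Finset.sum_mul] at h0
    simp only [Matrix.mulVec, Matrix.mul_apply, dotProduct, Pi.zero_apply, Finset.mul_sum]
    rw [← h0, Finset.sum_comm]
    apply Finset.sum_congr rfl
    intro l _
    apply Finset.sum_congr rfl
    intro j _
    rw [hW, matPolyEquiv_coeff_apply]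
    ring
  -- the fundamental recursion for the coefficients of W
  have hE : (X - Polynomial.C A) * W = (A.charpoly).map (algebraMap ℂ (Matrix (Fin n) (Fin n) ℂ)) := by
    have h := Matrix.mul_adjugate (charmatrix A)
    apply_fun matPolyEquiv at h
    rw [_root_.map_mul, matPolyEquiv_charmatrix] at h
    rw [hW, h, ← matPolyEquiv_smul_one]
    rfl
  have hrec : ∀ k : ℕ, W.coeff k = A * W.coeff (k + 1) + (A.charpoly.coeff (k + 1)) • 1 := by
    intro k
    have h := congrArg (fun P => Polynomial.coeff P (k + 1)) hE
    simp only [sub_mul, Polynomial.coeff_sub, Polynomial.coeff_X_mul,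
      Polynomial.coeff_C_mul, Polynomial.coeff_map, Algebra.algebraMap_eq_smul_one] at h
    rw [← h]; abel
  have hrec0 : A * W.coeff 0 = (-(A.charpoly.coeff 0)) • 1 := by
    have h := congrArg (fun P => Polynomial.coeff P 0) hE
    simp only [sub_mul, Polynomial.coeff_sub, Polynomial.mul_coeff_zero,
      Polynomial.coeff_X_zero, Polynomial.coeff_C_zero, Polynomial.coeff_map, zero_mul,
      zero_sub, Algebra.algebraMap_eq_smul_one] at h
    rw [neg_smul, ← h, neg_neg]
  -- coefficients of W vanish in degrees ≥ n
  have hvan : ∀ k : ℕ, n ≤ k → W.coeff k = 0 := by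
    have hstep : ∀ j k : ℕ, n ≤ k → W.coeff k = A ^ j * W.coeff (k + j) := by
      intro j
      induction j with
      | zero => intro k _; simp
      | succ j ih =>
        intro k hk
        have h1 : A.charpoly.coeff (k + 1) = 0 := by
          apply Polynomial.coeff_eq_zero_of_natDegree_lt
          rw [Matrix.charpoly_natDegree_eq_dim, Fintype.card_fin]
          omega
        have h2 : W.coeff k = A * W.coeff (k + 1) := by
          rw [hrec k, h1, zero_smul, add_zero]
        rw [h2, ih (k + 1) (by omega), ← Matrix.mul_assoc, ← pow_succ']
        congr 2
        omega
    intro k hk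
    rw [hstep (W.natDegree + 1) k hk, Polynomial.coeff_eq_zero_of_natDegree_lt (by omega),
      Matrix.mul_zero]
  -- finish, splitting on n = 0
  rcases n with _ | N
  · intro k
    funext i
    simp [Matrix.mulVec, dotProduct]
  · have hmonic : A.charpoly.coeff (N + 1) = 1 := by
      have h1 := A.charpoly_monic
      have h2 : A.charpoly.natDegree = N + 1 := by
        rw [Matrix.charpoly_natDegree_eq_dim, Fintype.card_fin]
      have h3 := h1.coeff_natDegree
      rwa [h2] at h3
    have hΔtop : W.coeff N = 1 := by
      rw [hrec N, hvan (N + 1) (by omega), Matrix.mul_zero, zero_add, hmonic, one_smul]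
    have hvv : A ^ 0 *ᵥ v = v := by simp
    have main : ∀ k : ℕ, ∀ i : ℕ, C *ᵥ (A ^ k *ᵥ (W.coeff i *ᵥ v)) = 0 := by
      intro k
      induction k with
      | zero => intro i; simpa using hCd i
      | succ k ih =>
        intro i
        have hsplit : A ^ (k + 1) *ᵥ (W.coeff i *ᵥ v) = A ^ k *ᵥ ((A * W.coeff i) *ᵥ v) := by
          rw [Matrix.mulVec_mulVec, Matrix.mulVec_mulVec, ← Matrix.mul_assoc, ← pow_succ]
        rw [hsplit]
        rcases i with _ | i'
        · rw [hrec0, Matrix.smul_mulVec, Matrix.one_mulVec, Matrix.mulVec_smul]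
          have : A ^ k *ᵥ v = A ^ k *ᵥ (W.coeff N *ᵥ v) := by rw [hΔtop, Matrix.one_mulVec]
          rw [this, Matrix.mulVec_smul, ih N, smul_zero]
        · have hAi : A * W.coeff (i' + 1) = W.coeff i' - (A.charpoly.coeff (i' + 1)) • 1 := by
            rw [hrec i']; abel
          rw [hAi, Matrix.sub_mulVec, Matrix.smul_mulVec, Matrix.one_mulVec]
          rw [Matrix.mulVec_sub, Matrix.mulVec_sub, Matrix.mulVec_smul, Matrix.mulVec_smul]
          have : A ^ k *ᵥ v = A ^ k *ᵥ (W.coeff N *ᵥ v) := by rw [hΔtop, Matrix.one_mulVec]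
          rw [this, ih i', ih N, smul_zero, sub_zero]
    intro k
    have : (C * A ^ k) *ᵥ v = C *ᵥ (A ^ k *ᵥ (W.coeff N *ᵥ v)) := by
      rw [hΔtop, Matrix.one_mulVec, Matrix.mulVec_mulVec]
    rw [this, main k N]

lemma span_resolvent_top (n : ℕ) {ι : Type*} [Fintype ι] [DecidableEq ι]
    (A : Matrix (Fin n) (Fin n) ℂ) (C : Matrix ι (Fin n) ℂ)
    (hobs : ∀ v : Fin n → ℂ, (∀ k : ℕ, (C * A ^ k) *ᵥ v = 0) → v = 0) :
    Submodule.span ℂ {u : Fin n → ℂ | ∃ z : ℂ,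
      (0 < z.re ∧ IsUnit (z • (1 : Matrix (Fin n) (Fin n) ℂ) - A).det) ∧ ∃ c : ι → ℂ,
      u = (C * (z • (1 : Matrix (Fin n) (Fin n) ℂ) - A)⁻¹)ᴴ *ᵥ c} = ⊤ := by
  set S : Set (Fin n → ℂ) := {u : Fin n → ℂ | ∃ z : ℂ,
      (0 < z.re ∧ IsUnit (z • (1 : Matrix (Fin n) (Fin n) ℂ) - A).det) ∧ ∃ c : ι → ℂ,
      u = (C * (z • (1 : Matrix (Fin n) (Fin n) ℂ) - A)⁻¹)ᴴ *ᵥ c} with hS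
  by_contra hne
  obtain ⟨φ, hφne, hφ⟩ :=
    Submodule.exists_dual_map_eq_bot_of_lt_top (lt_top_iff_ne_top.mpr hne) inferInstance
  set w : Fin n → ℂ := fun j => star (φ (fun j' => if j = j' then 1 else 0)) with hw
  have hφu : ∀ u ∈ S, φ u = 0 := by
    intro u hu
    have h1 : φ u ∈ (Submodule.span ℂ S).map φ :=
      Submodule.mem_map_of_mem (Submodule.subset_span hu)
    rwa [hφ, Submodule.mem_bot] at h1
  have hφw : ∀ u : Fin n → ℂ, φ u = u ⬝ᵥ star w := by
    intro u
    rw [LinearMap.pi_apply_eq_sum_univ φ u]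
    simp only [dotProduct, hw, Pi.star_apply, star_star, smul_eq_mul]
  -- the orthogonality condition
  have hC : ∀ z : ℂ, 0 < z.re → IsUnit (z • (1 : Matrix (Fin n) (Fin n) ℂ) - A).det →
      (C * (z • (1 : Matrix (Fin n) (Fin n) ℂ) - A)⁻¹) *ᵥ w = 0 := by
    intro z hz1 hz2
    funext i
    set F := C * (z • (1 : Matrix (Fin n) (Fin n) ℂ) - A)⁻¹ with hF
    have hu : (Fᴴ *ᵥ Pi.single i 1) ∈ S := ⟨z, ⟨hz1, hz2⟩, Pi.single i 1, rfl⟩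
    have h0 : φ (Fᴴ *ᵥ Pi.single i 1) = 0 := hφu _ hu
    rw [hφw] at h0
    have h1 : (Fᴴ *ᵥ Pi.single i 1) ⬝ᵥ star w = star ((F *ᵥ w) i) := by
      simp only [Matrix.mulVec, dotProduct, Matrix.conjTranspose_apply, Pi.star_apply,
        Pi.single_apply, mul_ite, mul_one, mul_zero, Finset.sum_ite_eq', Finset.mem_univ,
        if_true, star_sum, star_mul']
    rw [h1] at h0
    have := congrArg star h0
    rwa [star_star, star_zero] at this
  have hw0 : w = 0 := hobs w (resolvent_vanish A C w hC)
  apply hφne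
  apply LinearMap.ext
  intro u
  rw [hφw, hw0]
  simp

end KernelPositivityAux

set_option maxHeartbeats 1000000 in
/-- **Kernel positivity criterion (matrix form of Theorem 2.3).** If `(C, A)` is
observable, then `Γ ≻ 0` iff the kernel `K_{Θ,J}(z,ζ) = (J − Θ(z) J Θ(ζ)ᴴ)/(z + conj ζ)`
is a positive kernel on `{z : Re z > 0, zI − A invertible}`. -/
theorem kernel_positivity_criterion
    (n p m : ℕ) (A : Matrix (Fin n) (Fin n) ℂ)
    (C : Matrix (Fin p ⊕ Fin m) (Fin n) ℂ) (Γ : Matrix (Fin n) (Fin n) ℂ)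
    (hΓH : Γ.IsHermitian) (hΓinv : IsUnit Γ.det)
    (hLyap : Γ * A + Aᴴ * Γ = -(Cᴴ * signatureJ p m * C))
    (hobs : ∀ v : Fin n → ℂ, (∀ k : ℕ, (C * A ^ k) *ᵥ v = 0) → v = 0) :
    Γ.PosDef ↔
      IsPosKernelOn
        {z : ℂ | 0 < z.re ∧ IsUnit (z • (1 : Matrix (Fin n) (Fin n) ℂ) - A).det}
        (fun z ζ =>
          (z + star ζ)⁻¹ •
            (signatureJ p m -
              ThetaRealization n p m A C Γ z * signatureJ p m *
                (ThetaRealization n p m A C Γ ζ)ᴴ)) := by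
  -- the per-entry rewriting of the kernel
  have hterm : ∀ z ζ : ℂ,
      (0 < z.re ∧ IsUnit (z • (1 : Matrix (Fin n) (Fin n) ℂ) - A).det) →
      (0 < ζ.re ∧ IsUnit (ζ • (1 : Matrix (Fin n) (Fin n) ℂ) - A).det) →
      ∀ c1 c2 : (Fin p ⊕ Fin m) → ℂ,
      star c1 ⬝ᵥ ((z + star ζ)⁻¹ •
          (signatureJ p m - ThetaRealization n p m A C Γ z * signatureJ p m *
            (ThetaRealization n p m A C Γ ζ)ᴴ)) *ᵥ c2
        = star ((C * (z • (1 : Matrix (Fin n) (Fin n) ℂ) - A)⁻¹)ᴴ *ᵥ c1) ⬝ᵥ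
            Γ⁻¹ *ᵥ ((C * (ζ • (1 : Matrix (Fin n) (Fin n) ℂ) - A)⁻¹)ᴴ *ᵥ c2) := by
    intro z ζ hzD hζD c1 c2
    have hne : z + star ζ ≠ 0 := by
      intro h
      have h2 := congrArg Complex.re h
      simp only [Complex.add_re, Complex.zero_re] at h2
      have h3 : (star ζ).re = ζ.re := Complex.conj_re ζ
      have := hzD.1; have := hζD.1
      linarith
    have hmat : (z + star ζ)⁻¹ •
        (signatureJ p m - ThetaRealization n p m A C Γ z * signatureJ p m *
          (ThetaRealization n p m A C Γ ζ)ᴴ)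
        = (C * (z • (1 : Matrix (Fin n) (Fin n) ℂ) - A)⁻¹) *
            (Γ⁻¹ * (C * (ζ • (1 : Matrix (Fin n) (Fin n) ℂ) - A)⁻¹)ᴴ) := by
      rw [key_identity n p m A C Γ hΓH hΓinv hLyap z ζ hzD.2 hζD.2, smul_smul,
        inv_mul_cancel₀ hne, one_smul, conjTranspose_mul]
      simp only [Matrix.mul_assoc]
    rw [hmat, star_mulVec, conjTranspose_conjTranspose, Matrix.mulVec_mulVec,
      Matrix.dotProduct_mulVec, Matrix.dotProduct_mulVec, vecMul_vecMul]
  -- the double sum identity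
  have hsum : ∀ (M : ℕ) (ω : Fin M → ℂ),
      (∀ k, ω k ∈ {z : ℂ | 0 < z.re ∧ IsUnit (z • (1 : Matrix (Fin n) (Fin n) ℂ) - A).det}) →
      ∀ c : Fin M → (Fin p ⊕ Fin m) → ℂ,
      (∑ k, ∑ l, star (c k) ⬝ᵥ ((ω k + star (ω l))⁻¹ •
          (signatureJ p m - ThetaRealization n p m A C Γ (ω k) * signatureJ p m *
            (ThetaRealization n p m A C Γ (ω l))ᴴ)) *ᵥ c l)
        = star (∑ k, (C * (ω k • (1 : Matrix (Fin n) (Fin n) ℂ) - A)⁻¹)ᴴ *ᵥ c k) ⬝ᵥ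
            Γ⁻¹ *ᵥ (∑ k, (C * (ω k • (1 : Matrix (Fin n) (Fin n) ℂ) - A)⁻¹)ᴴ *ᵥ c k) := by
    intro M ω hω c
    set x : Fin M → (Fin n → ℂ) :=
      fun k => (C * (ω k • (1 : Matrix (Fin n) (Fin n) ℂ) - A)⁻¹)ᴴ *ᵥ c k with hx
    have h1 : (∑ k, ∑ l, star (c k) ⬝ᵥ ((ω k + star (ω l))⁻¹ •
        (signatureJ p m - ThetaRealization n p m A C Γ (ω k) * signatureJ p m *
          (ThetaRealization n p m A C Γ (ω l))ᴴ)) *ᵥ c l)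
        = ∑ k, ∑ l, star (x k) ⬝ᵥ Γ⁻¹ *ᵥ x l := by
      apply Finset.sum_congr rfl
      intro k _
      apply Finset.sum_congr rfl
      intro l _
      exact hterm (ω k) (ω l) (hω k) (hω l) (c k) (c l)
    rw [h1]
    have hdps : ∀ (u : Fin n → ℂ) (y : Fin M → Fin n → ℂ),
        u ⬝ᵥ (∑ l, Γ⁻¹ *ᵥ y l) = ∑ l, u ⬝ᵥ Γ⁻¹ *ᵥ y l := by
      intro u y
      simp only [dotProduct, Finset.sum_apply, Finset.mul_sum]
      rw [Finset.sum_comm]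
    have hmvs : Γ⁻¹ *ᵥ (∑ k, x k) = ∑ k, Γ⁻¹ *ᵥ x k := by
      have h := map_sum (Matrix.mulVecLin Γ⁻¹) x Finset.univ
      simpa only [Matrix.mulVecLin_apply] using h
    rw [hmvs, star_sum]
    have hsd : (∑ k, star (x k)) ⬝ᵥ (∑ l, Γ⁻¹ *ᵥ x l)
        = ∑ k, star (x k) ⬝ᵥ (∑ l, Γ⁻¹ *ᵥ x l) := by
      simp only [dotProduct, Finset.sum_apply, Finset.sum_mul]
      rw [Finset.sum_comm]
    rw [hsd]
    apply Finset.sum_congr rfl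
    intro k _
    exact (hdps _ _).symm
  constructor
  · intro hΓ M ω hω c
    rw [hsum M ω hω c]
    exact (hΓ.inv).posSemidef.dotProduct_mulVec_nonneg _
  · intro hK
    have hsemi : Γ⁻¹.PosSemidef := by
      refine PosSemidef.of_dotProduct_mulVec_nonneg hΓH.inv (fun x => ?_)
      have hx : x ∈ Submodule.span ℂ {u : Fin n → ℂ | ∃ z : ℂ,
          (0 < z.re ∧ IsUnit (z • (1 : Matrix (Fin n) (Fin n) ℂ) - A).det) ∧
          ∃ c : (Fin p ⊕ Fin m) → ℂ,
          u = (C * (z • (1 : Matrix (Fin n) (Fin n) ℂ) - A)⁻¹)ᴴ *ᵥ c} := by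
        rw [span_resolvent_top n A C hobs]
        trivial
      obtain ⟨M, f, g, hrep⟩ := Submodule.mem_span_set'.mp hx
      choose z hz cc hcc using fun i => (g i).2
      have hrep' : x = ∑ i, (C * (z i • (1 : Matrix (Fin n) (Fin n) ℂ) - A)⁻¹)ᴴ *ᵥ (f i • cc i) := by
        rw [← hrep]
        apply Finset.sum_congr rfl
        intro i _
        rw [Matrix.mulVec_smul, ← hcc i]
      have := hK M z hz (fun i => f i • cc i)
      rwa [hsum M z hz (fun i => f i • cc i), ← hrep'] at this
    have hinvdet : IsUnit Γ⁻¹.det := Γ.isUnit_nonsing_inv_det hΓinv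
    have hpd : Γ⁻¹.PosDef := by
      refine PosDef.of_dotProduct_mulVec_pos hsemi.1 (fun x hx => lt_of_le_of_ne (hsemi.dotProduct_mulVec_nonneg x) (fun h0 => hx ?_))
      have h1 : Γ⁻¹ *ᵥ x = 0 := (hsemi.dotProduct_mulVec_zero_iff x).mp h0.symm
      have h2 : Function.Injective (Γ⁻¹.mulVec) :=
        Matrix.mulVec_injective_iff_isUnit.mpr ((Matrix.isUnit_iff_isUnit_det _).mpr hinvdet)
      apply h2
      rw [h1, Matrix.mulVec_zero]
    have := hpd.inv
    rwa [Matrix.nonsing_inv_nonsing_inv Γ hΓinv] at this
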